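/- Let A : X → Y be a bounded operator between Banach spaces and Z a closed subspace of X of finite codimension. With R(A) = sup { dist(y**, Y) : y** ∈ weak*-closure of A(B_X) in Y** }, one has R(A|_Z) ≥ R(A)/3. In particular, if A fails to be weakly compact, then inf over all finite-codimensional closed subspaces Z of X of R(A|_Z) is strictly positive. -/

import Mathlib

noncomputable section
open Filter Metric NormedSpace

/-- The canonical map to `F` with its weak topology. -/
def toWeakSp (F : Type*) [NormedAddCommGroup F] [NormedSpace ℝ F] : F → WeakSpace ℝ F :=
  fun y => y

/-- The canonical map from the bidual to the bidual with its weak-star topology. -/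
def toWeakStar (F : Type*) [NormedAddCommGroup F] [NormedSpace ℝ F] :
    StrongDual ℝ (StrongDual ℝ F) → WeakDual ℝ (StrongDual ℝ F) := fun y => y

/-- The canonical map from the bidual with its weak-star topology to the normed bidual. -/
def ofWeakStar (F : Type*) [NormedAddCommGroup F] [NormedSpace ℝ F] :
    WeakDual ℝ (StrongDual ℝ F) → StrongDual ℝ (StrongDual ℝ F) := fun y => y

/-- An operator is weakly compact if the image of the closed unit ball is relatively
weakly compact. -/
def WCompact {E F : Type*} [NormedAddCommGroup E] [NormedSpace ℝ E]
    [NormedAddCommGroup F] [NormedSpace ℝ F] (T : E →L[ℝ] F) : Prop :=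
  IsCompact (closure (toWeakSp F ∘ T '' Metric.closedBall 0 1))

/-- `RConst T = sup { dist(y**, F) : y** ∈ weak*-closure of T(B_E) in F** }`. -/
def RConst {E F : Type*} [NormedAddCommGroup E] [NormedSpace ℝ E]
    [NormedAddCommGroup F] [NormedSpace ℝ F] (T : E →L[ℝ] F) : ℝ :=
  sSup ((fun z => Metric.infDist (ofWeakStar F z) (Set.range (inclusionInDoubleDual ℝ F))) ''
    closure (toWeakStar F ∘ inclusionInDoubleDual ℝ F ∘ T '' Metric.closedBall 0 1))

open Topology

section Aux

variable {E F : Type*} [NormedAddCommGroup E] [NormedSpace ℝ E]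
    [NormedAddCommGroup F] [NormedSpace ℝ F]

lemma closure_subset_ball (T : E →L[ℝ] F) :
    closure (toWeakStar F ∘ inclusionInDoubleDual ℝ F ∘ T '' Metric.closedBall 0 1) ⊆
      WeakDual.toStrongDual ⁻¹' Metric.closedBall 0 ‖T‖ := by
  apply closure_minimal _ (WeakDual.isClosed_closedBall 0 ‖T‖)
  rintro _ ⟨x, hx, rfl⟩
  have hx1 : ‖x‖ ≤ 1 := mem_closedBall_zero_iff.mp hx
  show inclusionInDoubleDual ℝ F (T x) ∈ Metric.closedBall 0 ‖T‖
  rw [mem_closedBall_zero_iff (E := StrongDual ℝ (StrongDual ℝ F))]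
  calc ‖inclusionInDoubleDual ℝ F (T x)‖ ≤ ‖T x‖ := double_dual_bound ℝ F (T x)
    _ ≤ ‖T‖ * ‖x‖ := T.le_opNorm x
    _ ≤ ‖T‖ := by nlinarith [norm_nonneg (T : E →L[ℝ] F), norm_nonneg x]

lemma bddAbove_dimg (T : E →L[ℝ] F) :
    BddAbove ((fun z => Metric.infDist (ofWeakStar F z) (Set.range (inclusionInDoubleDual ℝ F))) ''
      closure (toWeakStar F ∘ inclusionInDoubleDual ℝ F ∘ T '' Metric.closedBall 0 1)) := by
  refine ⟨‖T‖, ?_⟩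
  rintro r ⟨p, hp, rfl⟩
  have hb := closure_subset_ball T hp
  rw [Set.mem_preimage, mem_closedBall_zero_iff (E := StrongDual ℝ (StrongDual ℝ F))] at hb
  calc Metric.infDist (ofWeakStar F p) (Set.range (inclusionInDoubleDual ℝ F))
      ≤ dist (ofWeakStar F p) (inclusionInDoubleDual ℝ F 0) :=
        Metric.infDist_le_dist_of_mem ⟨0, rfl⟩
    _ ≤ ‖T‖ := by rw [map_zero, dist_zero_right (E := StrongDual ℝ (StrongDual ℝ F))]; exact hb

lemma mem_closure_self (T : E →L[ℝ] F) :
    toWeakStar F (inclusionInDoubleDual ℝ F (T 0)) ∈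
      closure (toWeakStar F ∘ inclusionInDoubleDual ℝ F ∘ T '' Metric.closedBall 0 1) :=
  subset_closure ⟨0, mem_closedBall_self zero_le_one, rfl⟩

lemma le_RConst (T : E →L[ℝ] F) {p : WeakDual ℝ (StrongDual ℝ F)}
    (hp : p ∈ closure (toWeakStar F ∘ inclusionInDoubleDual ℝ F ∘ T '' Metric.closedBall 0 1)) :
    Metric.infDist (ofWeakStar F p) (Set.range (inclusionInDoubleDual ℝ F)) ≤ RConst T :=
  le_csSup (bddAbove_dimg T) ⟨p, hp, rfl⟩

lemma RConst_nonneg (T : E →L[ℝ] F) : 0 ≤ RConst T :=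
  le_trans Metric.infDist_nonneg (le_RConst T (mem_closure_self T))

end Aux

lemma dist_add_three_smul {E : Type*} [NormedAddCommGroup E] [NormedSpace ℝ E] (a b c : E) :
    dist (a + (3:ℝ) • b) (a + (3:ℝ) • c) = 3 * dist b c := by
  rw [dist_eq_norm, dist_eq_norm,
    show a + (3:ℝ) • b - (a + (3:ℝ) • c) = (3:ℝ) • (b - c) by rw [smul_sub]; abel, norm_smul]
  simp

section Key1

variable {X Y : Type*} [NormedAddCommGroup X] [NormedSpace ℝ X]
    [NormedAddCommGroup Y] [NormedSpace ℝ Y]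

/-- The bundled continuous linear map into the weak-star bidual. -/
def PhiMap (A : X →L[ℝ] Y) : X →L[ℝ] WeakDual ℝ (StrongDual ℝ Y) :=
  (NormedSpace.Dual.continuousLinearMapToWeakDual).comp ((inclusionInDoubleDual ℝ Y).comp A)

lemma PhiMap_apply (A : X →L[ℝ] Y) (x : X) :
    PhiMap A x = toWeakStar Y (inclusionInDoubleDual ℝ Y (A x)) := rfl

set_option maxHeartbeats 1000000 in
theorem key1 (A : X →L[ℝ] Y) (Z : Submodule ℝ X) (hZc : IsClosed (Z : Set X))
    (hfd : FiniteDimensional ℝ (X ⧸ Z)) :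
    RConst A ≤ 3 * RConst (A.comp Z.subtypeL) := by
  haveI := hfd
  have h3 : (0:ℝ) ≤ 3 * RConst (A.comp Z.subtypeL) := by
    have := RConst_nonneg (A.comp Z.subtypeL); linarith
  rw [show RConst A = sSup ((fun z => Metric.infDist (ofWeakStar Y z)
      (Set.range (inclusionInDoubleDual ℝ Y))) ''
      closure (toWeakStar Y ∘ inclusionInDoubleDual ℝ Y ∘ A '' Metric.closedBall 0 1)) from rfl]
  apply Real.sSup_le _ h3
  rintro r ⟨p, hp, rfl⟩
  dsimp only
  -- extract an ultrafilter on X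
  obtain ⟨U, hU1, hU2⟩ := mem_closure_iff_ultrafilter.mp hp
  have hsel : ∀ y, y ∈ (toWeakStar Y ∘ inclusionInDoubleDual ℝ Y ∘ A '' Metric.closedBall 0 1) →
      ∃ x, x ∈ Metric.closedBall (0:X) 1 ∧ PhiMap A x = y := by
    rintro y ⟨x, hx, rfl⟩; exact ⟨x, hx, rfl⟩
  choose! sel hsel1 hsel2 using hsel
  set V : Ultrafilter X := U.map sel with hV
  have hBV : Metric.closedBall (0:X) 1 ∈ (V : Filter X) := by
    rw [hV, Ultrafilter.coe_map, mem_map]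
    exact mem_of_superset hU1 (fun y hy => hsel1 y hy)
  have hgV : Tendsto (fun x => PhiMap A x) (V : Filter X) (𝓝 p) := by
    rw [hV, Ultrafilter.coe_map, Filter.tendsto_map'_iff]
    have hid : Tendsto (fun y : WeakDual ℝ (StrongDual ℝ Y) => y) (U : Filter _) (𝓝 p) := hU2
    exact Tendsto.congr' (eventually_of_mem hU1 (fun y hy => (hsel2 y hy).symm)) hid
  -- the quotient map sends V to a convergent ultrafilter
  have hball : Metric.closedBall (0 : X ⧸ Z) 1 ∈ (V.map (Z.mkQ) : Filter (X ⧸ Z)) := by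
    rw [Ultrafilter.coe_map, mem_map]
    refine mem_of_superset hBV (fun x hx => ?_)
    have hx1 : ‖x‖ ≤ 1 := mem_closedBall_zero_iff.mp hx
    rw [Set.mem_preimage, mem_closedBall_zero_iff, Submodule.mkQ_apply]
    exact le_trans (Submodule.Quotient.norm_mk_le Z x) hx1
  obtain ⟨w, hw, hwle⟩ := (isCompact_closedBall (0 : X ⧸ Z) 1).ultrafilter_le_nhds
    (V.map (Z.mkQ)) (le_principal_iff.mpr hball)
  have hw1 : ‖w‖ ≤ 1 := mem_closedBall_zero_iff.mp hw
  -- a good lift of w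
  obtain ⟨x₀, hx₀mk, hx₀n⟩ := Submodule.Quotient.norm_mk_lt w (one_half_pos)
  have hx₀ : ‖x₀‖ ≤ 3/2 := by rw [show (1:ℝ)/2 = 2⁻¹ by norm_num] at hx₀n; linarith
  -- approximate decomposition
  have hzeta : ∀ x : X, ∃ z, z ∈ Z ∧ ‖x - x₀ - z‖ ≤ 2 * ‖Z.mkQ x - w‖ := by
    intro x
    have hmkdiff : Z.mkQ (x - x₀) = Z.mkQ x - w := by
      rw [map_sub, show Z.mkQ x₀ = w from by rw [Submodule.mkQ_apply, hx₀mk]]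
    by_cases h0 : Z.mkQ (x - x₀) = 0
    · refine ⟨x - x₀, ?_, ?_⟩
      · rw [Submodule.mkQ_apply, Submodule.Quotient.mk_eq_zero] at h0; exact h0
      · rw [sub_self, norm_zero]
        positivity
    · have hpos : 0 < ‖Z.mkQ (x - x₀)‖ := norm_pos_iff.mpr h0
      obtain ⟨m, hm1, hm2⟩ := Submodule.Quotient.norm_mk_lt (Z.mkQ (x - x₀)) hpos
      refine ⟨x - x₀ - m, ?_, ?_⟩
      · rw [← Submodule.Quotient.mk_eq_zero Z, ← Submodule.mkQ_apply, map_sub]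
        rw [show Z.mkQ m = Submodule.Quotient.mk m from rfl, hm1, sub_self]
      · rw [show x - x₀ - (x - x₀ - m) = m by abel]
        rw [← hmkdiff]
        linarith
  choose ζ hζZ hζb using hzeta
  -- limits along V
  have hqt : Tendsto (fun x => Z.mkQ x) (V : Filter X) (𝓝 w) := by
    rwa [Ultrafilter.coe_map] at hwle
  have herr : Tendsto (fun x => ‖Z.mkQ x - w‖) (V : Filter X) (𝓝 0) :=
    tendsto_iff_norm_sub_tendsto_zero.mp hqt
  have he : Tendsto (fun x => x - x₀ - ζ x) (V : Filter X) (𝓝 0) := by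
    apply squeeze_zero_norm hζb
    have := herr.const_mul (2:ℝ)
    simpa using this
  have hΦζ : Tendsto (fun x => PhiMap A (ζ x)) (V : Filter X) (𝓝 (p + PhiMap A (-x₀))) := by
    have h1 : ∀ x : X, PhiMap A (ζ x)
        = PhiMap A x + PhiMap A (-x₀) + PhiMap A (-(x - x₀ - ζ x)) := by
      intro x; rw [← map_add, ← map_add]; congr 1; abel
    simp only [h1]
    have h2 : Tendsto (fun x => PhiMap A (-(x - x₀ - ζ x))) (V : Filter X) (𝓝 0) := by
      have hneg : Tendsto (fun x => -(x - x₀ - ζ x)) (V : Filter X) (𝓝 0) := by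
        simpa using he.neg
      have h3 := ((PhiMap A).continuous.tendsto 0).comp hneg
      simpa [Function.comp_def] using h3
    have h4 : Tendsto (fun x => ((PhiMap A) x + (PhiMap A) (-x₀)) + (PhiMap A) (-(x - x₀ - ζ x)))
        (V : Filter X) (𝓝 ((p + (PhiMap A) (-x₀)) + 0)) :=
      (hgV.add (tendsto_const_nhds (x := PhiMap A (-x₀)))).add h2
    simpa using h4
  set u' : WeakDual ℝ (StrongDual ℝ Y) := (3:ℝ)⁻¹ • (p + PhiMap A (-x₀)) with hu'def
  have hu' : Tendsto (fun x => (3:ℝ)⁻¹ • PhiMap A (ζ x)) (V : Filter X) (𝓝 u') :=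
    hΦζ.const_smul _
  -- eventual membership in the image set of the restricted operator
  have h14 : ∀ᶠ x in (V : Filter X), ‖Z.mkQ x - w‖ < 1/4 :=
    herr.eventually (eventually_mem_set.mpr (Iio_mem_nhds (by norm_num)))
  have hev : ∀ᶠ x in (V : Filter X), (3:ℝ)⁻¹ • PhiMap A (ζ x) ∈
      (toWeakStar Y ∘ inclusionInDoubleDual ℝ Y ∘ (A.comp Z.subtypeL) ''
        Metric.closedBall 0 1) := by
    filter_upwards [hBV, h14] with x hx1 hx2
    have hxn : ‖x‖ ≤ 1 := mem_closedBall_zero_iff.mp hx1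
    have hz3 : ‖ζ x‖ ≤ 3 := by
      calc ‖ζ x‖ = ‖(x - x₀) - (x - x₀ - ζ x)‖ := by congr 1; abel
        _ ≤ ‖x - x₀‖ + ‖x - x₀ - ζ x‖ := norm_sub_le _ _
        _ ≤ (‖x‖ + ‖x₀‖) + 2 * ‖Z.mkQ x - w‖ := add_le_add (norm_sub_le _ _) (hζb x)
        _ ≤ 3 := by linarith
    refine ⟨⟨(3:ℝ)⁻¹ • ζ x, Z.smul_mem _ (hζZ x)⟩, ?_, ?_⟩
    · rw [mem_closedBall_zero_iff]
      show ‖(3:ℝ)⁻¹ • ζ x‖ ≤ 1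
      rw [norm_smul, Real.norm_eq_abs, abs_of_pos (by norm_num : (0:ℝ) < 3⁻¹)]
      linarith
    · show toWeakStar Y (inclusionInDoubleDual ℝ Y ((A.comp Z.subtypeL)
        (⟨(3:ℝ)⁻¹ • ζ x, Z.smul_mem _ (hζZ x)⟩ : Z))) = (3:ℝ)⁻¹ • PhiMap A (ζ x)
      have h5 : (A.comp Z.subtypeL) (⟨(3:ℝ)⁻¹ • ζ x, Z.smul_mem _ (hζZ x)⟩ : Z)
          = A ((3:ℝ)⁻¹ • ζ x) := rfl
      rw [h5, show toWeakStar Y (inclusionInDoubleDual ℝ Y (A ((3:ℝ)⁻¹ • ζ x)))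
        = PhiMap A ((3:ℝ)⁻¹ • ζ x) from rfl, map_smul]
  have humem : u' ∈ closure (toWeakStar Y ∘ inclusionInDoubleDual ℝ Y ∘ (A.comp Z.subtypeL) ''
      Metric.closedBall 0 1) := mem_closure_of_tendsto hu' hev
  -- the distance estimate
  have hd' : Metric.infDist (ofWeakStar Y u') (Set.range (inclusionInDoubleDual ℝ Y))
      ≤ RConst (A.comp Z.subtypeL) := le_RConst _ humem
  have hpd : ofWeakStar Y p = inclusionInDoubleDual ℝ Y (A x₀) + (3:ℝ) • (ofWeakStar Y u') := by
    show p = PhiMap A x₀ + (3:ℝ) • u'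
    rw [hu'def, smul_inv_smul₀ (by norm_num : (3:ℝ) ≠ 0), map_neg]
    abel
  have key : Metric.infDist (ofWeakStar Y p) (Set.range (inclusionInDoubleDual ℝ Y))
      ≤ 3 * Metric.infDist (ofWeakStar Y u') (Set.range (inclusionInDoubleDual ℝ Y)) := by
    refine le_of_forall_pos_le_add (fun ε hε => ?_)
    have hne : (Set.range (inclusionInDoubleDual ℝ Y)).Nonempty := ⟨_, 0, rfl⟩
    have hlt : Metric.infDist (ofWeakStar Y u') (Set.range (inclusionInDoubleDual ℝ Y))
        < Metric.infDist (ofWeakStar Y u') (Set.range (inclusionInDoubleDual ℝ Y)) + ε/3 :=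
      lt_add_of_pos_right _ (by positivity)
    obtain ⟨y0, ⟨y1, rfl⟩, hy0⟩ := (Metric.infDist_lt_iff hne).mp hlt
    calc Metric.infDist (ofWeakStar Y p) (Set.range (inclusionInDoubleDual ℝ Y))
        ≤ dist (ofWeakStar Y p) (inclusionInDoubleDual ℝ Y (A x₀ + (3:ℝ) • y1)) :=
          Metric.infDist_le_dist_of_mem ⟨_, rfl⟩
      _ = (3:ℝ) * dist (ofWeakStar Y u') (inclusionInDoubleDual ℝ Y y1) := by
          rw [hpd, map_add, map_smul]
          exact dist_add_three_smul (E := StrongDual ℝ (StrongDual ℝ Y)) _ _ _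
      _ ≤ 3 * (Metric.infDist (ofWeakStar Y u') (Set.range (inclusionInDoubleDual ℝ Y)) + ε/3) := by
          linarith
      _ = 3 * Metric.infDist (ofWeakStar Y u') (Set.range (inclusionInDoubleDual ℝ Y)) + ε := by
          ring
  linarith [mul_le_mul_of_nonneg_left hd' (by norm_num : (0:ℝ) ≤ 3)]

end Key1

section Key2

variable {X Y : Type*} [NormedAddCommGroup X] [NormedSpace ℝ X]
    [NormedAddCommGroup Y] [NormedSpace ℝ Y] [CompleteSpace Y]

theorem key2 (A : X →L[ℝ] Y) (h : RConst A = 0) : WCompact A := by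
  set S := closure (toWeakStar Y ∘ inclusionInDoubleDual ℝ Y ∘ A '' Metric.closedBall 0 1)
    with hS
  have hScomp : IsCompact S :=
    (WeakDual.isCompact_closedBall (𝕜 := ℝ) (E := StrongDual ℝ Y) 0 ‖A‖).of_isClosed_subset isClosed_closure
      (closure_subset_ball A)
  -- the canonical embedding of the weak space into the weak-star bidual
  set j : WeakSpace ℝ Y → WeakDual ℝ (StrongDual ℝ Y) :=
    fun y => toWeakStar Y (inclusionInDoubleDual ℝ Y y) with hj
  have hrange : IsClosed (Set.range (inclusionInDoubleDual ℝ Y)) := by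
    have hiso : Isometry (fun y : Y => inclusionInDoubleDual ℝ Y y) :=
      (inclusionInDoubleDualLi ℝ (E := Y)).isometry
    exact hiso.isClosedEmbedding.isClosed_range
  have hSrange : S ⊆ Set.range j := by
    intro p hp
    have h1 : Metric.infDist (ofWeakStar Y p) (Set.range (inclusionInDoubleDual ℝ Y)) = 0 :=
      le_antisymm (h ▸ le_RConst A hp) Metric.infDist_nonneg
    have h2 : ofWeakStar Y p ∈ Set.range (inclusionInDoubleDual ℝ Y) :=
      (hrange.mem_iff_infDist_zero (x := ofWeakStar Y p)
        (⟨_, 0, rfl⟩ : (Set.range (inclusionInDoubleDual ℝ Y)).Nonempty)).mpr h1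
    obtain ⟨y, hy⟩ := h2
    exact ⟨y, hy⟩
  -- j is inducing
  have hc2 : Topology.IsInducing (fun (q : WeakDual ℝ (StrongDual ℝ Y)) (g : StrongDual ℝ Y) =>
      topDualPairing ℝ (StrongDual ℝ Y) q g) := ⟨rfl⟩
  have hc1 : Topology.IsInducing (fun (y : WeakSpace ℝ Y) (g : StrongDual ℝ Y) =>
      (topDualPairing ℝ Y).flip y g) := ⟨rfl⟩
  have hjcont : Continuous j := by
    apply WeakBilin.continuous_of_continuous_eval
    intro g
    exact WeakBilin.eval_continuous ((topDualPairing ℝ Y).flip) g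
  have hcomp : (fun (q : WeakDual ℝ (StrongDual ℝ Y)) (g : StrongDual ℝ Y) =>
      topDualPairing ℝ (StrongDual ℝ Y) q g) ∘ j
      = (fun (y : WeakSpace ℝ Y) (g : StrongDual ℝ Y) => (topDualPairing ℝ Y).flip y g) := by
    funext y g; rfl
  have hind : Topology.IsInducing j :=
    Topology.IsInducing.of_comp hjcont hc2.continuous (hcomp ▸ hc1)
  -- conclude
  have hpre : IsCompact (j ⁻¹' S) := by
    rw [hind.isCompact_iff, Set.image_preimage_eq_inter_range,
      Set.inter_eq_self_of_subset_left hSrange]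
    exact hScomp
  have hWsub : closure (toWeakSp Y ∘ A '' Metric.closedBall 0 1) ⊆ j ⁻¹' S := by
    apply closure_minimal _ (hScomp.isClosed.preimage hjcont)
    rintro _ ⟨x, hx, rfl⟩
    exact subset_closure ⟨x, hx, rfl⟩
  exact hpre.of_isClosed_subset isClosed_closure hWsub

end Key2

theorem statement1 {X Y : Type*} [NormedAddCommGroup X] [NormedSpace ℝ X] [CompleteSpace X]
    [NormedAddCommGroup Y] [NormedSpace ℝ Y] [CompleteSpace Y] (A : X →L[ℝ] Y) :
    (∀ Z : Submodule ℝ X, IsClosed (Z : Set X) → FiniteDimensional ℝ (X ⧸ Z) →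
      RConst A / 3 ≤ RConst (A.comp Z.subtypeL)) ∧
    (¬ WCompact A →
      0 < sInf {r : ℝ | ∃ Z : Submodule ℝ X, IsClosed (Z : Set X) ∧
        FiniteDimensional ℝ (X ⧸ Z) ∧ r = RConst (A.comp Z.subtypeL)}) := by
  have hpart1 : ∀ Z : Submodule ℝ X, IsClosed (Z : Set X) → FiniteDimensional ℝ (X ⧸ Z) →
      RConst A / 3 ≤ RConst (A.comp Z.subtypeL) := by
    intro Z hZc hfd
    have := key1 A Z hZc hfd
    linarith
  refine ⟨hpart1, fun hnc => ?_⟩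
  have hRpos : 0 < RConst A :=
    lt_of_le_of_ne (RConst_nonneg A) (fun h => hnc (key2 A h.symm))
  have hne : {r : ℝ | ∃ Z : Submodule ℝ X, IsClosed (Z : Set X) ∧
      FiniteDimensional ℝ (X ⧸ Z) ∧ r = RConst (A.comp Z.subtypeL)}.Nonempty := by
    refine ⟨RConst (A.comp (⊤ : Submodule ℝ X).subtypeL), ⊤, ?_, ?_, rfl⟩
    · rw [Submodule.top_coe]; exact isClosed_univ
    · haveI : Subsingleton (X ⧸ (⊤ : Submodule ℝ X)) :=
        Submodule.Quotient.subsingleton_iff.mpr rfl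
      infer_instance
  have hlow : ∀ r ∈ {r : ℝ | ∃ Z : Submodule ℝ X, IsClosed (Z : Set X) ∧
      FiniteDimensional ℝ (X ⧸ Z) ∧ r = RConst (A.comp Z.subtypeL)}, RConst A / 3 ≤ r := by
    rintro r ⟨Z, hZc, hfd, rfl⟩
    exact hpart1 Z hZc hfd
  have := le_csInf hne hlow
  have h0 : 0 < RConst A / 3 := by positivity
  linarith
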